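/- Let A be a commutative Hopf algebra over ℝ that is finitely generated as an ℝ-algebra, and suppose that ℂ ⊗_ℝ A is an integral domain. Then A is a formally real ring: whenever a finite sum of squares of elements of A equals zero, each of those elements is zero. -/

import Mathlib

open TensorProduct

namespace FRHopf

variable {A : Type*} [CommRing A] [Algebra ℝ A]

/-- Leibniz rule predicate for a linear endomorphism. -/
def IsDeriv (D : A →ₗ[ℝ] A) : Prop := ∀ a b : A, D (a * b) = a * D b + b * D a

lemma IsDeriv.comm {D E : A →ₗ[ℝ] A} (hD : IsDeriv D) (hE : IsDeriv E) :
    IsDeriv (D ∘ₗ E - E ∘ₗ D) := by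
  intro a b
  have h1 : ∀ x : A, (D ∘ₗ E - E ∘ₗ D) x = D (E x) - E (D x) := by intro x; simp
  rw [h1, hE a b, hD a b, map_add, map_add, hD a (E b), hD b (E a), hE a (D b), hE b (D a),
    h1, h1]
  ring

lemma IsDeriv.sum {ι : Type*} (s : Finset ι) (D : ι → (A →ₗ[ℝ] A)) (c : ι → ℝ)
    (hD : ∀ j, IsDeriv (D j)) : IsDeriv (∑ j ∈ s, c j • D j) := by
  intro a b
  simp only [LinearMap.sum_apply, LinearMap.smul_apply, hD _ a b, smul_add, Finset.sum_add_distrib,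
    Finset.mul_sum, mul_smul_comm]

variable (m : Ideal A)

lemma IsDeriv.mem_pow {D : A →ₗ[ℝ] A} (hD : IsDeriv D) :
    ∀ (k : ℕ) (a : A), a ∈ m ^ k → D a ∈ m ^ (k - 1) := by
  intro k
  induction k with
  | zero => intro a _; simp [Ideal.one_eq_top]
  | succ k ih =>
    intro a ha
    rcases k with _ | k
    · simp [Ideal.one_eq_top]
    · rw [pow_succ] at ha
      simp only [Nat.add_sub_cancel] at *
      refine Submodule.mul_induction_on ha (fun x hx y hy => ?_) (fun x y hx hy => ?_)
      · rw [hD]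
        refine Ideal.add_mem _ (Ideal.mul_mem_right _ _ ?_) ?_
        · exact hx
        · have : D x ∈ m ^ k := by simpa using ih x hx
          rw [pow_succ']
          exact Ideal.mul_mem_mul hy this
      · rw [map_add]; exact Ideal.add_mem _ hx hy

/-- Apply a list of endomorphisms, head outermost. -/
def appL (L : List (A →ₗ[ℝ] A)) (f : A) : A := L.foldr (fun D g => D g) f

@[simp] lemma appL_nil (f : A) : appL ([] : List (A →ₗ[ℝ] A)) f = f := rfl

@[simp] lemma appL_cons (D : A →ₗ[ℝ] A) (L : List (A →ₗ[ℝ] A)) (f : A) :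
    appL (D :: L) f = D (appL L f) := rfl

lemma appL_append (L L' : List (A →ₗ[ℝ] A)) (f : A) :
    appL (L ++ L') f = appL L (appL L' f) := by
  simp [appL, List.foldr_append]

lemma appL_concat (L : List (A →ₗ[ℝ] A)) (D : A →ₗ[ℝ] A) (f : A) :
    appL (L.concat D) f = appL L (D f) := by
  simp [List.concat_eq_append, appL_append, appL]

lemma appL_sub (L : List (A →ₗ[ℝ] A)) (f g : A) :
    appL L (f - g) = appL L f - appL L g := by
  induction L with
  | nil => rfl
  | cons D L ih => simp [ih, map_sub]

lemma appL_mem_pow {L : List (A →ₗ[ℝ] A)} (hL : ∀ D ∈ L, IsDeriv D) :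
    ∀ (k : ℕ) (a : A), a ∈ m ^ k → appL L a ∈ m ^ (k - L.length) := by
  induction L with
  | nil => intro k a ha; simpa using ha
  | cons D L ih =>
    intro k a ha
    have h1 : appL L a ∈ m ^ (k - L.length) := ih (fun E hE => hL E (List.mem_cons_of_mem _ hE)) k a ha
    have h2 : D (appL L a) ∈ m ^ (k - L.length - 1) := (hL D (List.mem_cons_self)).mem_pow m _ _ h1
    have : k - L.length - 1 = k - (D :: L).length := by simp [List.length_cons]; omega
    rwa [this] at h2

lemma perm_diff_mem : ∀ {L L' : List (A →ₗ[ℝ] A)}, L.Perm L' → (∀ D ∈ L, IsDeriv D) →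
    ∀ (k : ℕ) (a : A), a ∈ m ^ k → appL L a - appL L' a ∈ m ^ (k + 1 - L.length) := by
  intro L L' hperm
  induction hperm with
  | nil => intro _ k a ha; simpa using Ideal.zero_mem _
  | @cons x T T' h ih =>
    intro hder k a ha
    have hT : ∀ D ∈ T, IsDeriv D := fun D hD => hder D (List.mem_cons_of_mem _ hD)
    have hx : IsDeriv x := hder x (List.mem_cons_self)
    have h1 : appL T a - appL T' a ∈ m ^ (k + 1 - T.length) := ih hT k a ha
    have h2 : x (appL T a - appL T' a) ∈ m ^ (k + 1 - T.length - 1) := hx.mem_pow m _ _ h1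
    have h3 : appL (x :: T) a - appL (x :: T') a = x (appL T a - appL T' a) := by
      simp [map_sub]
    rw [h3]
    have : k + 1 - T.length - 1 = k + 1 - (x :: T).length := by simp [List.length_cons]; omega
    rwa [this] at h2
  | @swap x y T =>
    intro hder k a ha
    -- goal : appL (y :: x :: T) a - appL (x :: y :: T) a ∈ _
    have hT : ∀ D ∈ T, IsDeriv D := fun D hD => hder D (by simp [hD])
    have hx : IsDeriv x := hder x (by simp)
    have hy : IsDeriv y := hder y (by simp)
    have hg : appL T a ∈ m ^ (k - T.length) := appL_mem_pow m hT k a ha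
    have hcomm : IsDeriv (y ∘ₗ x - x ∘ₗ y) := hy.comm hx
    have h2 : (y ∘ₗ x - x ∘ₗ y) (appL T a) ∈ m ^ (k - T.length - 1) :=
      hcomm.mem_pow m _ _ hg
    have h3 : appL (y :: x :: T) a - appL (x :: y :: T) a
        = (y ∘ₗ x - x ∘ₗ y) (appL T a) := by
      simp [LinearMap.sub_apply]
    rw [h3]
    have : k - T.length - 1 = k + 1 - (y :: x :: T).length := by simp [List.length_cons]; omega
    rwa [this] at h2
  | @trans L₁ L₂ L₃ p q ih1 ih2 =>
    intro hder k a ha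
    have h1 := ih1 hder k a ha
    have h2 := ih2 (fun D hD => hder D (p.mem_iff.mpr hD)) k a ha
    have hl : L₂.length = L₁.length := (p.length_eq).symm
    rw [hl] at h2
    have := Ideal.add_mem _ h1 h2
    rwa [sub_add_sub_cancel] at this


def cT {d : ℕ} (w : Fin d → Bool) : ℕ := (List.ofFn w).count true

lemma cT_cons {d : ℕ} (b : Bool) (w : Fin d → Bool) :
    cT (Fin.cons b w) = (if b then 1 else 0) + cT w := by
  cases b <;> simp [cT, List.ofFn_succ, List.count_cons, Nat.add_comm]

lemma cT_const_false {d : ℕ} : cT (fun _ : Fin d => false) = 0 := by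
  simp [cT, List.ofFn_const, List.count_replicate]

lemma cT_le {d : ℕ} (w : Fin d → Bool) : cT w ≤ d := by
  simpa [cT] using (List.count_le_length (a := true) (l := List.ofFn w))

lemma exists_cT {d k : ℕ} (h : k ≤ d) : ∃ w : Fin d → Bool, cT w = k := by
  induction d generalizing k with
  | zero =>
    obtain rfl : k = 0 := Nat.le_zero.mp h
    exact ⟨fun i => i.elim0, by simp [cT]⟩
  | succ d ih =>
    rcases k with _ | k
    · exact ⟨fun _ => false, cT_const_false⟩
    · obtain ⟨w, hw⟩ := ih (k := k) (by omega)
      refine ⟨Fin.cons true w, ?_⟩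
      rw [cT_cons, hw, if_pos rfl]
      omega

def listOf (P Q : A →ₗ[ℝ] A) {d : ℕ} (w : Fin d → Bool) : List (A →ₗ[ℝ] A) :=
  List.ofFn (fun i => if w i then Q else P)

lemma listOf_cons (P Q : A →ₗ[ℝ] A) {d : ℕ} (b : Bool) (w : Fin d → Bool) :
    listOf P Q (Fin.cons b w) = (if b then Q else P) :: listOf P Q w := by
  simp [listOf, List.ofFn_succ]

lemma listOf_length (P Q : A →ₗ[ℝ] A) {d : ℕ} (w : Fin d → Bool) :
    (listOf P Q w).length = d := by simp [listOf]

lemma listOf_mem {P Q : A →ₗ[ℝ] A} (hP : IsDeriv P) (hQ : IsDeriv Q) {d : ℕ}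
    (w : Fin d → Bool) : ∀ D ∈ listOf P Q w, IsDeriv D := by
  intro D hD
  rw [listOf, List.mem_ofFn] at hD
  obtain ⟨i, rfl⟩ := hD
  split <;> assumption

lemma listOf_perm (P Q : A →ₗ[ℝ] A) : ∀ {d : ℕ} (w : Fin d → Bool),
    (listOf P Q w).Perm (List.replicate (cT w) Q ++ List.replicate (d - cT w) P) := by
  intro d
  induction d with
  | zero =>
    intro w
    have h0 : cT w = 0 := by simp [cT]
    rw [h0]
    simp [listOf]
  | succ d ih =>
    intro w
    rw [← Fin.cons_self_tail w, listOf_cons, cT_cons]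
    have hle := cT_le (Fin.tail w)
    cases hb : w 0
    · simp only [Bool.false_eq_true, if_false, zero_add]
      have h1 : d + 1 - cT (Fin.tail w) = (d - cT (Fin.tail w)) + 1 := by omega
      rw [h1, List.replicate_succ', ← List.append_assoc]
      refine ((ih (Fin.tail w)).cons P).trans ?_
      simpa using (List.perm_middle (a := P)
        (l₁ := List.replicate (cT (Fin.tail w)) Q ++ List.replicate (d - cT (Fin.tail w)) P)
        (l₂ := [])).symm
    · simp only [if_true]
      have h1 : d + 1 - (1 + cT (Fin.tail w)) = d - cT (Fin.tail w) := by omega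
      rw [h1, Nat.add_comm 1 (cT (Fin.tail w)), List.replicate_succ, List.cons_append]
      exact (ih (Fin.tail w)).cons Q

lemma appL_replicate (D : A →ₗ[ℝ] A) (k : ℕ) (f : A) :
    appL (List.replicate k D) f = (D ^ k) f := by
  induction k with
  | zero => simp [appL]
  | succ k ih => rw [List.replicate_succ, appL_cons, ih, pow_succ', Module.End.mul_apply]

lemma IsDeriv.pow_mem (m : Ideal A) {D : A →ₗ[ℝ] A} (hD : IsDeriv D) (j k : ℕ) (a : A)
    (ha : a ∈ m ^ k) : (D ^ j) a ∈ m ^ (k - j) := by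
  induction j with
  | zero => simpa using ha
  | succ j ih =>
    have h2 := hD.mem_pow m _ _ ih
    have he : k - j - 1 = k - (j + 1) := by omega
    rw [he] at h2
    rwa [pow_succ', Module.End.mul_apply]

lemma consEquiv_eq {d : ℕ} (b : Bool) (w : Fin d → Bool) :
    (Fin.consEquiv (fun _ => Bool)) (b, w) = Fin.cons b w := rfl

lemma exp_pow (P Q : A →ₗ[ℝ] A) (s : ℝ) : ∀ (d : ℕ) (f : A),
    (((P + s • Q)) ^ d) f = ∑ w : Fin d → Bool, s ^ (cT w) • appL (listOf P Q w) f := by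
  intro d
  induction d with
  | zero =>
    intro f
    rw [pow_zero]
    rw [Finset.sum_eq_single (fun i => i.elim0)]
    · have h0 : cT (fun i : Fin 0 => i.elim0) = 0 := by simp [cT]
      rw [h0]
      simp [listOf, appL]
    · intro w _ hw; exact absurd (funext fun i => i.elim0) hw
    · intro h; exact absurd (Finset.mem_univ _) h
  | succ d ih =>
    intro f
    rw [pow_succ', Module.End.mul_apply, ih f, map_sum]
    rw [← (Fin.consEquiv (fun _ => Bool)).sum_comp (fun w => s ^ (cT w) • appL (listOf P Q w) f)]
    rw [Fintype.sum_prod_type, Fintype.sum_bool]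
    rw [← Finset.sum_add_distrib]
    refine Finset.sum_congr rfl fun w _ => ?_
    simp only [consEquiv_eq, cT_cons, listOf_cons, appL_cons, if_true,
      Bool.false_eq_true, if_false, zero_add]
    rw [LinearMap.add_apply, LinearMap.smul_apply, map_smul, map_smul, smul_smul, pow_add,
      pow_one, add_comm]

lemma pow_leibniz {D : A →ₗ[ℝ] A} (hD : IsDeriv D) : ∀ (k : ℕ) (f g : A),
    (D ^ k) (f * g) = ∑ w : Fin k → Bool, (D ^ (cT w)) f * (D ^ (k - cT w)) g := by
  intro k
  induction k with
  | zero =>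
    intro f g
    rw [pow_zero]
    rw [Finset.sum_eq_single (fun i => i.elim0)]
    · simp [cT]
    · intro w _ hw; exact absurd (funext fun i => i.elim0) hw
    · intro h; exact absurd (Finset.mem_univ _) h
  | succ k ih =>
    intro f g
    rw [pow_succ', Module.End.mul_apply, ih f g, map_sum]
    rw [← (Fin.consEquiv (fun _ => Bool)).sum_comp
      (fun w => (D ^ (cT w)) f * (D ^ (k + 1 - cT w)) g)]
    rw [Fintype.sum_prod_type, Fintype.sum_bool]
    rw [← Finset.sum_add_distrib]
    refine Finset.sum_congr rfl fun w _ => ?_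
    simp only [consEquiv_eq, cT_cons, if_true, Bool.false_eq_true, if_false, zero_add]
    have hle := cT_le w
    rw [hD ((D ^ cT w) f) ((D ^ (k - cT w)) g)]
    have e1 : (D ^ (1 + cT w)) f = D ((D ^ cT w) f) := by
      rw [Nat.add_comm, pow_succ', Module.End.mul_apply]
    have e2 : (D ^ (k + 1 - cT w)) g = D ((D ^ (k - cT w)) g) := by
      have : k + 1 - cT w = (k - cT w) + 1 := by omega
      rw [this, pow_succ', Module.End.mul_apply]
    have e3 : k + 1 - (1 + cT w) = k - cT w := by omega
    rw [e1, e2, e3]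
    ring

lemma perm_phi (m : Ideal A) (φ : A →ₗ[ℝ] ℝ) (hφm : ∀ a ∈ m, φ a = 0)
    {L L' : List (A →ₗ[ℝ] A)} (hp : L.Perm L') (hder : ∀ D ∈ L, IsDeriv D)
    {f : A} (hf : f ∈ m ^ L.length) : φ (appL L f) = φ (appL L' f) := by
  have h := perm_diff_mem m hp hder L.length f hf
  have he : L.length + 1 - L.length = 1 := by omega
  rw [he, pow_one] at h
  have h2 := hφm _ h
  rw [map_sub] at h2
  linarith

lemma polar (m : Ideal A) (φ : A →ₗ[ℝ] ℝ) (hφm : ∀ a ∈ m, φ a = 0)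
    {P Q : A →ₗ[ℝ] A} (hP : IsDeriv P) (hQ : IsDeriv Q)
    (d : ℕ) (f : A) (hf : f ∈ m ^ (d + 1))
    (h : ∀ s : ℝ, φ (((P + s • Q) ^ (d + 1)) f) = 0) :
    φ ((P ^ d) (Q f)) = 0 := by
  set τ : ℕ → ℝ := fun k => φ (appL (List.replicate k Q ++ List.replicate (d + 1 - k) P) f)
    with hτ
  have hword : ∀ w : Fin (d + 1) → Bool, φ (appL (listOf P Q w) f) = τ (cT w) := by
    intro w
    refine perm_phi m φ hφm (listOf_perm P Q w) (listOf_mem hP hQ w) ?_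
    rw [listOf_length]; exact hf
  set POL : Polynomial ℝ :=
    ∑ w : Fin (d + 1) → Bool, Polynomial.C (τ (cT w)) * Polynomial.X ^ (cT w) with hPOL
  have heval : ∀ s : ℝ, POL.eval s = 0 := by
    intro s
    rw [hPOL, Polynomial.eval_finset_sum]
    simp only [Polynomial.eval_mul, Polynomial.eval_C, Polynomial.eval_pow, Polynomial.eval_X]
    have h1 := h s
    rw [exp_pow, map_sum] at h1
    simp only [map_smul, smul_eq_mul, hword] at h1
    rw [← h1]
    exact Finset.sum_congr rfl fun w _ => mul_comm _ _
  have hP0 : POL = 0 := Polynomial.funext (by simpa using heval)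
  have hcoeff := congrArg (fun p => Polynomial.coeff p 1) hP0
  simp only [hPOL, Polynomial.finset_sum_coeff, Polynomial.coeff_C_mul, Polynomial.coeff_X_pow,
    Polynomial.coeff_zero] at hcoeff
  have hc2 : ∑ w : Fin (d + 1) → Bool, (if cT w = 1 then τ 1 else 0) = 0 := by
    have hcongr : ∑ w : Fin (d + 1) → Bool, (if cT w = 1 then τ 1 else 0)
        = ∑ w : Fin (d + 1) → Bool, τ (cT w) * (if 1 = cT w then 1 else 0) := by
      refine Finset.sum_congr rfl fun w _ => ?_
      by_cases hcw : cT w = 1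
      · rw [if_pos hcw, hcw, if_pos rfl, mul_one]
      · rw [if_neg hcw, if_neg (fun h' => hcw h'.symm), mul_zero]
    rw [hcongr]
    exact hcoeff
  rw [← Finset.sum_filter, Finset.sum_const, nsmul_eq_mul] at hc2
  have hne : (Finset.univ.filter (fun w : Fin (d + 1) → Bool => cT w = 1)).Nonempty := by
    obtain ⟨w, hw⟩ := exists_cT (d := d + 1) (k := 1) (by omega)
    exact ⟨w, Finset.mem_filter.mpr ⟨Finset.mem_univ _, hw⟩⟩
  have hcard : ((Finset.univ.filter (fun w : Fin (d + 1) → Bool => cT w = 1)).card : ℝ) ≠ 0 :=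
    Nat.cast_ne_zero.mpr (Finset.card_ne_zero_of_mem hne.choose_spec)
  have hτ1 : τ 1 = 0 := by
    rcases mul_eq_zero.mp hc2 with h' | h'
    · exact absurd h' hcard
    · exact h'
  have hfin : φ ((P ^ d) (Q f)) = τ 1 := by
    have e1 : φ ((P ^ d) (Q f)) = φ (appL (List.replicate d P ++ [Q]) f) := by
      rw [appL_append, appL_cons, appL_nil, appL_replicate]
    rw [e1, hτ]
    have hperm : (List.replicate d P ++ [Q]).Perm
        (List.replicate 1 Q ++ List.replicate (d + 1 - 1) P) := by
      simp only [List.replicate_one, Nat.add_sub_cancel, List.singleton_append]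
      simpa using (List.perm_middle (a := Q) (l₁ := List.replicate d P) (l₂ := []))
    refine perm_phi m φ hφm hperm ?_ ?_
    · intro D hD
      rcases List.mem_append.mp hD with h' | h'
      · rw [List.eq_of_mem_replicate h']; exact hP
      · rw [List.mem_singleton.mp h']; exact hQ
    · simp only [List.length_append, List.length_replicate, List.length_cons,
        List.length_nil]
      exact hf
  rw [hfin]; exact hτ1

lemma mainstep (m : Ideal A) (φ : A →ₗ[ℝ] ℝ) (hφm : ∀ a ∈ m, φ a = 0)
    (hφmul : ∀ a b : A, φ (a * b) = φ a * φ b)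
    {D : A →ₗ[ℝ] A} (hD : IsDeriv D) (d : ℕ) {n : ℕ} (f : Fin n → A)
    (hf : ∀ i, f i ∈ m ^ d) (hsum : ∑ i, f i ^ 2 = 0) (i : Fin n) :
    φ ((D ^ d) (f i)) = 0 := by
  have h0 : (0 : ℝ) = ∑ i, ∑ w : Fin (2 * d) → Bool,
      (if cT w = d then (φ ((D ^ d) (f i))) ^ 2 else 0) := by
    have h1 : φ ((D ^ (2 * d)) (∑ i, f i ^ 2)) = 0 := by rw [hsum]; simp
    rw [map_sum, map_sum] at h1
    calc (0 : ℝ) = ∑ i, φ ((D ^ (2 * d)) (f i ^ 2)) := h1.symm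
    _ = _ := by
      refine Finset.sum_congr rfl fun i _ => ?_
      rw [sq, pow_leibniz hD, map_sum]
      refine Finset.sum_congr rfl fun w _ => ?_
      rw [hφmul]
      rcases lt_trichotomy (cT w) d with hlt | heq | hgt
      · rw [if_neg hlt.ne]
        have hmem : (D ^ cT w) (f i) ∈ m ^ (d - cT w) := hD.pow_mem m _ _ _ (hf i)
        have hm' : (D ^ cT w) (f i) ∈ m := Ideal.pow_le_self (by omega) hmem
        rw [hφm _ hm', zero_mul]
      · rw [if_pos heq, heq]
        have he : 2 * d - d = d := by omega
        rw [he, sq]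
      · rw [if_neg hgt.ne']
        have hle := cT_le w
        have hmem : (D ^ (2 * d - cT w)) (f i) ∈ m ^ (d - (2 * d - cT w)) :=
          hD.pow_mem m _ _ _ (hf i)
        have hm' : (D ^ (2 * d - cT w)) (f i) ∈ m := Ideal.pow_le_self (by omega) hmem
        rw [hφm _ hm', mul_zero]
  have hterm : ∀ j ∈ Finset.univ (α := Fin n), (0 : ℝ) ≤ ∑ w : Fin (2 * d) → Bool,
      (if cT w = d then (φ ((D ^ d) (f j))) ^ 2 else 0) := by
    intro j _
    refine Finset.sum_nonneg fun w _ => ?_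
    by_cases hc : cT w = d
    · rw [if_pos hc]; exact sq_nonneg _
    · rw [if_neg hc]
  have hi := (Finset.sum_eq_zero_iff_of_nonneg hterm).mp h0.symm i (Finset.mem_univ i)
  have hw0 := (Finset.sum_eq_zero_iff_of_nonneg (fun w _ => by
      by_cases hc : cT w = d
      · rw [if_pos hc]; exact sq_nonneg _
      · rw [if_neg hc])).mp hi
  obtain ⟨w, hw⟩ := exists_cT (d := 2 * d) (k := d) (by omega)
  have hfin := hw0 w (Finset.mem_univ w)
  rw [if_pos hw] at hfin
  exact sq_eq_zero_iff.mp hfin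


lemma euler_base (m : Ideal A) (φ : A →ₗ[ℝ] ℝ) (hφ1 : φ 1 = 1)
    (hker : ∀ a : A, φ a = 0 → a ∈ m)
    {N : ℕ} (D : Fin N → (A →ₗ[ℝ] A)) (e : Fin N → A) (he : ∀ j, e j ∈ m)
    (heuler : ∀ b ∈ m, b - ∑ j, φ ((D j) b) • e j ∈ m ^ 2)
    (f : A) (hf : f ∈ m) : f - ∑ j, e j * (D j) f ∈ m ^ 2 := by
  have h1 : ∀ j : Fin N, e j * (D j) f - φ ((D j) f) • e j ∈ m ^ 2 := by
    intro j
    have hmem : (D j) f - φ ((D j) f) • (1 : A) ∈ m := by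
      apply hker
      rw [map_sub, map_smul, hφ1, smul_eq_mul, mul_one, sub_self]
    have h2 : e j * ((D j) f - φ ((D j) f) • (1 : A)) ∈ m ^ 2 := by
      rw [pow_two]; exact Ideal.mul_mem_mul (he j) hmem
    rwa [mul_sub, Algebra.mul_smul_comm, mul_one] at h2
  have h2 : ∑ j, (e j * (D j) f - φ ((D j) f) • e j) ∈ m ^ 2 :=
    Ideal.sum_mem _ fun j _ => h1 j
  have h3 := Ideal.sub_mem _ (heuler f hf) h2
  have h4 : (f - ∑ j, φ ((D j) f) • e j) - ∑ j, (e j * (D j) f - φ ((D j) f) • e j)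
      = f - ∑ j, e j * (D j) f := by
    rw [Finset.sum_sub_distrib]; ring
  rwa [h4] at h3

lemma euler (m : Ideal A) (φ : A →ₗ[ℝ] ℝ) (hφ1 : φ 1 = 1)
    (hker : ∀ a : A, φ a = 0 → a ∈ m)
    {N : ℕ} (D : Fin N → (A →ₗ[ℝ] A)) (hD : ∀ j, IsDeriv (D j))
    (e : Fin N → A) (he : ∀ j, e j ∈ m)
    (heuler : ∀ b ∈ m, b - ∑ j, φ ((D j) b) • e j ∈ m ^ 2) (d : ℕ) :
    ∀ f ∈ m ^ (d + 1), ((d + 1 : ℕ) : ℝ) • f - ∑ j, e j * (D j) f ∈ m ^ (d + 2) := by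
  induction d with
  | zero =>
    intro f hf
    have := euler_base m φ hφ1 hker D e he heuler f (by simpa using hf)
    simpa using this
  | succ d ih =>
    intro f hf
    rw [pow_succ] at hf
    refine Submodule.mul_induction_on hf ?_ ?_
    · intro x hx y hy
      have hΘ : ∑ j, e j * (D j) (x * y)
          = x * (∑ j, e j * (D j) y) + y * (∑ j, e j * (D j) x) := by
        rw [Finset.mul_sum, Finset.mul_sum, ← Finset.sum_add_distrib]
        refine Finset.sum_congr rfl fun j _ => ?_
        rw [hD j x y]; ring
      have key : ((d + 1 + 1 : ℕ) : ℝ) • (x * y) - ∑ j, e j * (D j) (x * y)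
          = (((d + 1 : ℕ) : ℝ) • x - ∑ j, e j * (D j) x) * y
            + x * (y - ∑ j, e j * (D j) y) := by
        rw [hΘ, Algebra.smul_def, Algebra.smul_def]
        have hcast : ((d + 1 + 1 : ℕ) : ℝ) = ((d + 1 : ℕ) : ℝ) + 1 := by push_cast; ring
        rw [hcast, map_add, map_one]
        ring
      rw [key]
      refine Ideal.add_mem _ ?_ ?_
      · rw [pow_succ]
        exact Ideal.mul_mem_mul (ih x hx) hy
      · have hb := euler_base m φ hφ1 hker D e he heuler y hy
        have hmm := Ideal.mul_mem_mul hx hb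
        have hee : m ^ (d + 1) * m ^ 2 = m ^ (d + 1 + 2) := (pow_add m (d+1) 2).symm
        rw [hee] at hmm
        have : d + 1 + 2 = d + 3 := by omega
        rw [this] at hmm
        exact hmm
    · intro x y hx hy
      have hsum := Ideal.add_mem _ hx hy
      have heq : (((d + 1 + 1 : ℕ) : ℝ) • x - ∑ j, e j * (D j) x)
          + (((d + 1 + 1 : ℕ) : ℝ) • y - ∑ j, e j * (D j) y)
          = ((d + 1 + 1 : ℕ) : ℝ) • (x + y) - ∑ j, e j * (D j) (x + y) := by
        have hs : ∑ j, e j * (D j) (x + y) = ∑ j, e j * (D j) x + ∑ j, e j * (D j) y := by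
          rw [← Finset.sum_add_distrib]
          refine Finset.sum_congr rfl fun j _ => ?_
          rw [map_add, mul_add]
        rw [hs, smul_add]
        ring
      rwa [heq] at hsum

lemma reg (m : Ideal A) (φ : A →ₗ[ℝ] ℝ) (hφ1 : φ 1 = 1) (hφm : ∀ a ∈ m, φ a = 0)
    (hker : ∀ a : A, φ a = 0 → a ∈ m)
    {N : ℕ} (D : Fin N → (A →ₗ[ℝ] A)) (hD : ∀ j, IsDeriv (D j))
    (e : Fin N → A) (he : ∀ j, e j ∈ m)
    (heuler : ∀ b ∈ m, b - ∑ j, φ ((D j) b) • e j ∈ m ^ 2) :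
    ∀ (d : ℕ) (f : A), f ∈ m ^ d →
      (∀ x : Fin N → ℝ, φ (((∑ j, x j • D j) ^ d) f) = 0) → f ∈ m ^ (d + 1) := by
  intro d
  induction d with
  | zero =>
    intro f _ h
    have h0 := h 0
    rw [pow_zero] at h0
    rw [zero_add, pow_one]
    exact hker f (by simpa using h0)
  | succ d ih =>
    intro f hf h
    have hDj : ∀ j, (D j) f ∈ m ^ (d + 1) := by
      intro j
      have hg : (D j) f ∈ m ^ d := by
        have h' := (hD j).mem_pow m (d + 1) f hf
        simpa using h'
      refine ih ((D j) f) hg ?_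
      intro y
      have hPder : IsDeriv (∑ j', y j' • D j') := IsDeriv.sum _ _ _ hD
      have hQder : IsDeriv (D j) := hD j
      have hs : ∀ s : ℝ, φ ((((∑ j', y j' • D j') + s • D j) ^ (d + 1)) f) = 0 := by
        intro s
        have hxy := h (fun j' => y j' + s * (if j' = j then 1 else 0))
        have heq : (∑ j', (y j' + s * (if j' = j then 1 else 0)) • D j')
            = (∑ j', y j' • D j') + s • D j := by
          have hsplit : ∀ j' : Fin N, (y j' + s * (if j' = j then 1 else 0)) • D j'
              = y j' • D j' + (if j' = j then s • D j else 0) := by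
            intro j'
            rw [add_smul]
            congr 1
            by_cases hjj : j' = j
            · subst hjj; rw [if_pos rfl, if_pos rfl, mul_one]
            · rw [if_neg hjj, if_neg hjj, mul_zero, zero_smul]
          rw [Finset.sum_congr rfl fun j' _ => hsplit j', Finset.sum_add_distrib,
            Finset.sum_ite_eq' Finset.univ j (fun _ => s • D j), if_pos (Finset.mem_univ j)]
        rw [heq] at hxy
        exact hxy
      exact polar m φ hφm hPder hQder d f hf hs
    have hΘ : ∑ j, e j * (D j) f ∈ m ^ (d + 2) := by
      refine Ideal.sum_mem _ fun j _ => ?_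
      rw [pow_succ']
      exact Ideal.mul_mem_mul (he j) (hDj j)
    have hE := euler m φ hφ1 hker D hD e he heuler d f hf
    have hsm : ((d + 1 : ℕ) : ℝ) • f ∈ m ^ (d + 2) := by
      have := Ideal.add_mem _ hE hΘ
      simpa using this
    have hne : ((d + 1 : ℕ) : ℝ) ≠ 0 := by positivity
    have hout : f = (((d + 1 : ℕ) : ℝ))⁻¹ • (((d + 1 : ℕ) : ℝ) • f) := by
      rw [smul_smul, inv_mul_cancel₀ hne, one_smul]
    rw [hout, Algebra.smul_def]
    exact Ideal.mul_mem_left _ _ hsm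


section Hopf
variable {B : Type*} [CommRing B] [Bialgebra ℝ B]

/-- Contraction against a functional in the right tensor factor. -/
noncomputable def Cright (ξ : B →ₗ[ℝ] ℝ) : B ⊗[ℝ] B →ₗ[ℝ] B :=
  TensorProduct.lift ((LinearMap.lsmul ℝ B ∘ₗ ξ).flip)

@[simp] lemma Cright_tmul (ξ : B →ₗ[ℝ] ℝ) (a b : B) :
    Cright ξ (a ⊗ₜ[ℝ] b) = ξ b • a := rfl

/-- The left-invariant vector field attached to a tangent functional. -/
noncomputable def Dxi (ξ : B →ₗ[ℝ] ℝ) : B →ₗ[ℝ] B :=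
  (Cright ξ) ∘ₗ (Coalgebra.comul (R := ℝ) (A := B))

lemma Cright_counit_eq (t : B ⊗[ℝ] B) :
    Cright (Coalgebra.counit (R := ℝ)) t
      = (TensorProduct.rid ℝ B) ((LinearMap.lTensor B (Coalgebra.counit (R := ℝ))) t) := by
  induction t with
  | zero => rw [map_zero, map_zero, (TensorProduct.rid ℝ B).map_zero]
  | tmul a b => simp
  | add x y hx hy => simp only [map_add, hx, hy]

lemma Cright_counit_comul (a : B) :
    Cright (Coalgebra.counit (R := ℝ)) (Coalgebra.comul a) = a := by
  rw [Cright_counit_eq, Coalgebra.lTensor_counit_comul]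
  simp

lemma counit_Cright (ξ : B →ₗ[ℝ] ℝ) (t : B ⊗[ℝ] B) :
    Coalgebra.counit (Cright ξ t)
      = ξ ((TensorProduct.lid ℝ B) ((LinearMap.rTensor B (Coalgebra.counit (R := ℝ))) t)) := by
  induction t with
  | zero => rw [map_zero, map_zero, map_zero, (TensorProduct.lid ℝ B).map_zero, map_zero]
  | tmul a b =>
    simp [smul_eq_mul, mul_comm]
  | add x y hx hy => simp only [map_add, hx, hy]

lemma counit_Dxi (ξ : B →ₗ[ℝ] ℝ) (a : B) :
    Coalgebra.counit (Dxi ξ a) = ξ a := by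
  rw [Dxi, LinearMap.comp_apply, counit_Cright, Coalgebra.rTensor_counit_comul]
  simp

/-- Being a derivation at the counit. -/
def IsEpsDeriv (ξ : B →ₗ[ℝ] ℝ) : Prop :=
  ∀ a b : B, ξ (a * b) = Coalgebra.counit a * ξ b + Coalgebra.counit b * ξ a

lemma Cright_mul (ξ : B →ₗ[ℝ] ℝ) (hξ : IsEpsDeriv ξ) (t s : B ⊗[ℝ] B) :
    Cright ξ (t * s) = Cright (Coalgebra.counit (R := ℝ)) t * Cright ξ s
      + Cright ξ t * Cright (Coalgebra.counit (R := ℝ)) s := by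
  induction t with
  | zero => simp
  | tmul a b =>
    induction s with
    | zero => simp
    | tmul c d =>
      rw [Algebra.TensorProduct.tmul_mul_tmul]
      simp only [Cright_tmul]
      rw [hξ b d, add_smul, smul_mul_smul_comm, smul_mul_smul_comm, mul_comm (ξ b)]
    | add u v hu hv =>
      rw [mul_add, map_add, hu, hv, map_add, map_add]
      ring
  | add x y hx hy =>
    rw [add_mul, map_add, hx, hy, map_add, map_add]
    ring

lemma Dxi_apply (ξ : B →ₗ[ℝ] ℝ) (a : B) : Dxi ξ a = Cright ξ (Coalgebra.comul a) := rfl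

lemma Dxi_isDeriv (ξ : B →ₗ[ℝ] ℝ) (hξ : IsEpsDeriv ξ) : IsDeriv (Dxi ξ) := by
  intro a b
  rw [Dxi_apply, Bialgebra.comul_mul, Cright_mul ξ hξ, Cright_counit_comul, Cright_counit_comul,
    Dxi_apply, Dxi_apply]
  ring

lemma isEpsDeriv_of (ξ : B →ₗ[ℝ] ℝ) (h1 : ξ 1 = 0)
    (h2 : ∀ x ∈ (RingHom.ker (Bialgebra.counitAlgHom ℝ B : B →+* ℝ)) ^ 2, ξ x = 0) :
    IsEpsDeriv ξ := by
  intro a b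
  set ε : B →ₗ[ℝ] ℝ := Coalgebra.counit with hε
  have hmem : ∀ c : B, c - ε c • 1 ∈ RingHom.ker (Bialgebra.counitAlgHom ℝ B : B →+* ℝ) := by
    intro c
    rw [RingHom.mem_ker]
    show Coalgebra.counit (c - ε c • (1 : B)) = (0 : ℝ)
    rw [map_sub, map_smul, Bialgebra.counit_one, smul_eq_mul, mul_one, hε, sub_self]
  have hprod : ξ ((a - ε a • 1) * (b - ε b • 1)) = 0 :=
    h2 _ (by rw [pow_two]; exact Ideal.mul_mem_mul (hmem a) (hmem b))
  have hexp : a * b = (ε a * ε b) • (1 : B) + ε a • (b - ε b • 1) + ε b • (a - ε a • 1)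
      + (a - ε a • 1) * (b - ε b • 1) := by
    simp only [Algebra.smul_def, map_mul, map_sub, mul_one]
    ring
  rw [hexp]
  simp only [map_add, map_smul, map_sub, h1, hprod, smul_eq_mul]
  ring

end Hopf

lemma exists_dual_system {B : Type*} [CommRing B] [Algebra ℝ B] (φ : B →ₐ[ℝ] ℝ)
    (hfg : (RingHom.ker (φ : B →+* ℝ)).FG) :
    ∃ (N : ℕ) (e : Fin N → B) (ξ : Fin N → (B →ₗ[ℝ] ℝ)),
      (∀ j, e j ∈ RingHom.ker (φ : B →+* ℝ)) ∧
      (∀ j, ξ j 1 = 0) ∧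
      (∀ j, ∀ x ∈ (RingHom.ker (φ : B →+* ℝ)) ^ 2, ξ j x = 0) ∧
      (∀ b ∈ RingHom.ker (φ : B →+* ℝ),
        b - ∑ j, (ξ j b) • e j ∈ (RingHom.ker (φ : B →+* ℝ)) ^ 2) := by
  classical
  set m : Ideal B := RingHom.ker (φ : B →+* ℝ) with hm
  have hφm : ∀ a ∈ m, φ a = 0 := fun a ha => RingHom.mem_ker.mp ha
  have hker : ∀ a : B, φ a = 0 → a ∈ m := fun a ha => RingHom.mem_ker.mpr ha
  obtain ⟨s, hs0⟩ := hfg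
  have hs : Submodule.span B (s : Set B) = m := hs0
  set mR : Submodule ℝ B := Submodule.restrictScalars ℝ m with hmR
  set NN : Submodule ℝ mR := (Submodule.restrictScalars ℝ (m ^ 2)).comap mR.subtype with hNN
  have hmemNN : ∀ x : mR, x ∈ NN ↔ (x : B) ∈ m ^ 2 := by
    intro x
    rw [hNN, Submodule.mem_comap]
    exact Submodule.restrictScalars_mem ℝ _ _
  have hm2m : ∀ x ∈ m ^ 2, x ∈ m := fun x hx => Ideal.pow_le_self two_ne_zero hx
  have hρmem : ∀ a : B, a - φ a • 1 ∈ m := by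
    intro a
    refine hker _ ?_
    rw [map_sub, map_smul, map_one, smul_eq_mul, mul_one, sub_self]
  let ρ : B →ₗ[ℝ] mR :=
    { toFun := fun a => ⟨a - φ a • 1, hρmem a⟩
      map_add' := by
        intro a b
        apply Subtype.ext
        show (a + b) - φ (a + b) • (1 : B) = (a - φ a • 1) + (b - φ b • 1)
        rw [map_add, add_smul]; ring
      map_smul' := by
        intro c a
        apply Subtype.ext
        show (c • a) - φ (c • a) • (1 : B) = c • (a - φ a • 1)
        rw [map_smul, smul_sub, smul_eq_mul, mul_smul] }
  set S : Set mR := {x : mR | (x : B) ∈ (s : Set B)} with hS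
  have hSfin : S.Finite := Set.Finite.preimage (Subtype.coe_injective.injOn) s.finite_toSet
  have hspan : Submodule.span ℝ (NN.mkQ '' S) = ⊤ := by
    rw [Submodule.eq_top_iff']
    intro v
    obtain ⟨x, rfl⟩ := NN.mkQ_surjective v
    have main : ∀ (a : B) (ha : a ∈ Submodule.span B (s : Set B)),
        ∀ ham : a ∈ m, NN.mkQ ⟨a, ham⟩ ∈ Submodule.span ℝ (NN.mkQ '' S) := by
      intro a ha
      induction ha using Submodule.span_induction with
      | mem x hxs =>
        intro ham
        exact Submodule.subset_span ⟨⟨x, ham⟩, hxs, rfl⟩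
      | zero =>
        intro ham
        have h0 : (⟨0, ham⟩ : mR) = 0 := rfl
        rw [h0, map_zero]
        exact Submodule.zero_mem _
      | add x y hx hy ihx ihy =>
        intro ham
        have hxm : x ∈ m := hs ▸ hx
        have hym : y ∈ m := hs ▸ hy
        have hadd : (⟨x + y, ham⟩ : mR) = ⟨x, hxm⟩ + ⟨y, hym⟩ := rfl
        rw [hadd, map_add]
        exact Submodule.add_mem _ (ihx hxm) (ihy hym)
      | smul c x hx ihx =>
        intro ham
        have hxm : x ∈ m := hs ▸ hx
        have hc2 : (c - φ c • 1) * x ∈ m ^ 2 := by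
          rw [pow_two]; exact Ideal.mul_mem_mul (hρmem c) hxm
        have hcm : (c - φ c • 1) * x ∈ m := hm2m _ hc2
        have hval : c • x = (φ c) • x + (c - φ c • 1) * x := by
          simp only [smul_eq_mul, Algebra.smul_def, mul_one]
          ring
        have hsplit : (⟨c • x, ham⟩ : mR) = (φ c) • (⟨x, hxm⟩ : mR)
            + (⟨(c - φ c • 1) * x, hcm⟩ : mR) := by
          apply Subtype.ext
          exact hval
        rw [hsplit, map_add, map_smul]
        have hzero : NN.mkQ (⟨(c - φ c • 1) * x, hcm⟩ : mR) = 0 :=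
          (Submodule.Quotient.mk_eq_zero NN).mpr ((hmemNN _).mpr hc2)
        rw [hzero, add_zero]
        exact Submodule.smul_mem _ _ (ihx hxm)
    have hxm : (x : B) ∈ m := x.2
    have hx' : (x : B) ∈ Submodule.span B (s : Set B) := hs.symm ▸ hxm
    have hres := main (x : B) hx' hxm
    simpa using hres
  haveI : Module.Finite ℝ (mR ⧸ NN) := by
    rw [Module.finite_def, ← hspan]
    exact Submodule.fg_span (hSfin.image _)
  set nV := Module.finrank ℝ (mR ⧸ NN) with hnV
  let bV : Module.Basis (Fin nV) ℝ (mR ⧸ NN) := Module.finBasis ℝ _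
  choose lift hlift using fun j : Fin nV => NN.mkQ_surjective (bV j)
  refine ⟨nV, fun j => (lift j : B), fun j => (bV.coord j) ∘ₗ NN.mkQ ∘ₗ ρ, ?_, ?_, ?_, ?_⟩
  · exact fun j => (lift j).2
  · intro j
    have hρ1 : ρ (1 : B) = 0 := by
      apply Subtype.ext
      show (1 : B) - φ 1 • 1 = ((0 : mR) : B)
      rw [map_one, one_smul, sub_self]
      rfl
    simp [LinearMap.comp_apply, hρ1]
  · intro j x hx
    have hφx : φ x = 0 := hφm x (hm2m x hx)
    have hρx : ρ x = ⟨x, hm2m x hx⟩ := by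
      apply Subtype.ext
      show x - φ x • 1 = x
      rw [hφx, zero_smul, sub_zero]
    have hq : NN.mkQ (ρ x) = 0 := by
      rw [hρx]
      exact (Submodule.Quotient.mk_eq_zero NN).mpr ((hmemNN _).mpr hx)
    simp [LinearMap.comp_apply, hq]
  · intro b hb
    have hφb : φ b = 0 := hφm b hb
    have hρb : ρ b = ⟨b, hb⟩ := by
      apply Subtype.ext
      show b - φ b • 1 = b
      rw [hφb, zero_smul, sub_zero]
    set v := NN.mkQ (⟨b, hb⟩ : mR) with hv
    have hξb : ∀ j, ((bV.coord j) ∘ₗ NN.mkQ ∘ₗ ρ) b = bV.repr v j := by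
      intro j
      rw [LinearMap.comp_apply, LinearMap.comp_apply, hρb, ← hv, Module.Basis.coord_apply]
    have hdiff : NN.mkQ ((⟨b, hb⟩ : mR) - ∑ j, (bV.repr v j) • lift j) = 0 := by
      rw [map_sub, map_sum]
      simp only [map_smul, hlift]
      rw [← hv, bV.sum_repr v, sub_self]
    have hmem2 := (hmemNN _).mp ((Submodule.Quotient.mk_eq_zero NN).mp hdiff)
    have hcoe : (((⟨b, hb⟩ : mR) - ∑ j, (bV.repr v j) • lift j : mR) : B)
        = b - ∑ j, (bV.repr v j) • ((lift j : B)) := by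
      push_cast
      simp
    rw [hcoe] at hmem2
    have hfinal : (∑ j, (((bV.coord j) ∘ₗ NN.mkQ ∘ₗ ρ) b) • ((lift j : B)))
        = ∑ j, (bV.repr v j) • ((lift j : B)) :=
      Finset.sum_congr rfl fun j _ => by rw [hξb j]
    rw [hfinal]
    exact hmem2

lemma domain_of_complexification (A : Type*) [CommRing A] [Algebra ℝ A]
    [IsDomain (ℂ ⊗[ℝ] A)] : IsDomain A := by
  have hinj : Function.Injective
      (Algebra.TensorProduct.includeRight (R := ℝ) (A := ℂ) (B := A)) := by
    intro a b hab
    have h1 := congrArg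
      (fun t => (TensorProduct.lid ℝ A) ((LinearMap.rTensor A Complex.reLm) t)) hab
    simp only [Algebra.TensorProduct.includeRight_apply, LinearMap.rTensor_tmul,
      TensorProduct.lid_tmul] at h1
    have hre : Complex.reLm (1 : ℂ) = 1 := Complex.one_re
    rw [hre, one_smul, one_smul] at h1
    exact h1
  exact Function.Injective.isDomain
    (Algebra.TensorProduct.includeRight (R := ℝ) (A := ℂ) (B := A)).toRingHom hinj

end FRHopf

open TensorProduct

/-- Case `F = ℝ` of Lemma 2.2: if `A` is a commutative Hopf algebra over `ℝ`, finitely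
generated as an `ℝ`-algebra, such that `ℂ ⊗[ℝ] A` is an integral domain, then `A` is a
formally real ring. -/
theorem coordinate_ring_of_connected_real_group_is_formally_real
    (A : Type*) [CommRing A] [HopfAlgebra ℝ A] [Algebra.FiniteType ℝ A]
    [IsDomain (ℂ ⊗[ℝ] A)] :
    ∀ (n : ℕ) (f : Fin n → A), (∑ i, f i ^ 2) = 0 → ∀ i, f i = 0 := by
  classical
  intro n f hsum i₀
  haveI : IsDomain A := FRHopf.domain_of_complexification A
  haveI : IsNoetherianRing A := Algebra.FiniteType.isNoetherianRing ℝ A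
  set Φ : A →ₐ[ℝ] ℝ := Bialgebra.counitAlgHom ℝ A with hΦ
  set m : Ideal A := RingHom.ker (Φ : A →+* ℝ) with hm
  set ε : A →ₗ[ℝ] ℝ := Coalgebra.counit with hε
  have hφ1 : ε (1 : A) = 1 := Bialgebra.counit_one
  have hφm : ∀ a ∈ m, ε a = 0 := by
    intro a ha
    rw [hm] at ha
    have h2 : (Φ : A →+* ℝ) a = 0 := RingHom.mem_ker.mp ha
    exact h2
  have hker : ∀ a : A, ε a = 0 → a ∈ m := by
    intro a ha
    rw [hm]
    exact RingHom.mem_ker.mpr (show (Φ : A →+* ℝ) a = 0 from ha)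
  have hφmul : ∀ a b : A, ε (a * b) = ε a * ε b := Bialgebra.counit_mul
  have hmne : m ≠ ⊤ := by
    rw [Ideal.ne_top_iff_one]
    intro hone
    have h1 := hφm 1 hone
    rw [hφ1] at h1
    exact one_ne_zero h1
  obtain ⟨N, e, ξ, he, hξ1, hξ2, heuler⟩ :=
    FRHopf.exists_dual_system Φ (IsNoetherian.noetherian m)
  set D : Fin N → (A →ₗ[ℝ] A) := fun j => FRHopf.Dxi (ξ j) with hD
  have hDder : ∀ j, FRHopf.IsDeriv (D j) := fun j =>
    FRHopf.Dxi_isDeriv (ξ j) (FRHopf.isEpsDeriv_of (ξ j) (hξ1 j) (hξ2 j))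
  have hεD : ∀ (j : Fin N) (a : A), ε (D j a) = ξ j a := fun j a => FRHopf.counit_Dxi (ξ j) a
  have heuler' : ∀ b ∈ m, b - ∑ j, ε ((D j) b) • e j ∈ m ^ 2 := by
    intro b hb
    have h1 : ∑ j, ε ((D j) b) • e j = ∑ j, (ξ j b) • e j :=
      Finset.sum_congr rfl fun j _ => by rw [hεD]
    rw [h1]
    exact heuler b hb
  have key : ∀ d : ℕ, ∀ j, f j ∈ m ^ d := by
    intro d
    induction d with
    | zero => intro j; rw [pow_zero, Ideal.one_eq_top]; exact Submodule.mem_top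
    | succ d ih =>
      intro j
      refine FRHopf.reg m ε hφ1 hφm hker D hDder e he heuler' d (f j) (ih j) ?_
      intro x
      exact FRHopf.mainstep m ε hφm hφmul (FRHopf.IsDeriv.sum Finset.univ D x hDder)
        d f ih hsum j
  have hbot : f i₀ ∈ (⊥ : Ideal A) := by
    rw [← Ideal.iInf_pow_eq_bot_of_isDomain m hmne]
    exact (Submodule.mem_iInf _).mpr fun d => key d i₀
  exact Ideal.mem_bot.mp hbot
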